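/- arXiv:1910.04582 — 4 statements merged into one kernel-verified Lean document; each statement's English description precedes it below -/
import Mathlib

section
/- Let n ≥ 1, let Ψ ∈ ℝ^{n×n} be symmetric positive definite, let λ > 0, and set p = 1 − (1+λ)^{-n/2} (note p ∈ (0,1)). Then for every z ∈ ℝⁿ, (1/p) · (1 − exp(−(λ/2) · zᵀ Ψ⁻¹ z)) · g_Ψ(z) = (1/p) · g_Ψ(z) − ((1−p)/p) · g_{(1+λ)^{-1}Ψ}(z). That is, the Bayes-updated density of the predicted error given triggering (and collision) is the signed mixture (1/p)·N(0,Ψ) − ((1−p)/p)·N(0, Ψ/(1+λ)) of two centered Gaussians (equation (16) of the paper). -/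
open Matrix MeasureTheory Real

/-- Centered Gaussian density with covariance `S` on `ℝⁿ`. -/
noncomputable def gaussDensity {n : ℕ} (S : Matrix (Fin n) (Fin n) ℝ) (z : Fin n → ℝ) : ℝ :=
  (((2 * Real.pi) • S).det) ^ (-(1 / 2) : ℝ) * Real.exp (-(1 / 2) * (z ⬝ᵥ S⁻¹ *ᵥ z))

theorem stmt2 (n : ℕ) (hn : 1 ≤ n) (Ψ : Matrix (Fin n) (Fin n) ℝ) (hΨ : Ψ.PosDef)
    (lam : ℝ) (hlam : 0 < lam) (p : ℝ) (hp : p = 1 - (1 + lam) ^ (-(n : ℝ) / 2))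
    (z : Fin n → ℝ) :
    (1 / p) * (1 - Real.exp (-(lam / 2) * (z ⬝ᵥ Ψ⁻¹ *ᵥ z))) * gaussDensity Ψ z =
      (1 / p) * gaussDensity Ψ z - ((1 - p) / p) * gaussDensity ((1 + lam)⁻¹ • Ψ) z := by
  set c : ℝ := 1 + lam with hc
  have hc1 : 1 < c := by simp [hc]; linarith
  have hc0 : 0 < c := by linarith
  have hcne : c ≠ 0 := ne_of_gt hc0
  -- p positivity
  have hcp : (c : ℝ) ^ (-(n : ℝ) / 2) < 1 :=
    Real.rpow_lt_one_of_one_lt_of_neg hc1 (by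
      have : (0:ℝ) < n := by exact_mod_cast hn
      linarith [this] )
  have hppos : 0 < p := by rw [hp]; linarith
  have hpne : p ≠ 0 := ne_of_gt hppos
  -- quadratic form
  set q : ℝ := z ⬝ᵥ Ψ⁻¹ *ᵥ z with hq
  -- inverse of scaled matrix
  have hdet : IsUnit Ψ.det := isUnit_iff_ne_zero.mpr (ne_of_gt hΨ.det_pos)
  have hinv : ((c⁻¹ • Ψ))⁻¹ = c • Ψ⁻¹ := by
    have := Matrix.inv_smul' (Units.mk0 c hcne)⁻¹ hdet (A := Ψ)
    simpa [Units.smul_def, Units.val_inv_eq_inv_val, Units.val_mk0] using this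
  have hquad : z ⬝ᵥ ((c⁻¹ • Ψ))⁻¹ *ᵥ z = c * q := by
    rw [hinv, hq, Matrix.smul_mulVec, dotProduct_smul, smul_eq_mul]
  -- determinants
  set D : ℝ := ((2 * Real.pi) • Ψ).det with hD
  have hDpos : 0 < D := by
    rw [hD, Matrix.det_smul]
    exact mul_pos (pow_pos (by positivity) _) hΨ.det_pos
  have hdet2 : ((2 * Real.pi) • (c⁻¹ • Ψ)).det = (c ^ (-(n:ℝ))) * D := by
    rw [smul_comm, Matrix.det_smul, hD,
      Real.rpow_neg hc0.le, Real.rpow_natCast]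
    simp [Finset.card_univ, inv_pow]
  have hpow : ((c ^ (-(n:ℝ))) * D) ^ (-(1/2) : ℝ)
      = c ^ ((n:ℝ)/2) * D ^ (-(1/2):ℝ) := by
    rw [Real.mul_rpow (Real.rpow_nonneg hc0.le _) hDpos.le,
      ← Real.rpow_mul hc0.le, show (-(n:ℝ)) * (-(1/2)) = (n:ℝ)/2 by ring]
  have h1p : 1 - p = c ^ (-(n:ℝ)/2) := by rw [hp]; ring
  have hcc : c ^ (-(n:ℝ)/2) * c ^ ((n:ℝ)/2) = 1 := by
    rw [← Real.rpow_add hc0]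
    have h0 : (-(n:ℝ)/2 + (n:ℝ)/2) = 0 := by ring
    rw [h0, Real.rpow_zero]
  -- expand
  unfold gaussDensity
  rw [hdet2, hpow, hquad, ← hD, ← hq, h1p]
  have hexp : Real.exp (-(lam/2) * q) * Real.exp (-(1/2) * q)
      = Real.exp (-(1/2) * (c * q)) := by
    rw [← Real.exp_add]; congr 1; rw [hc]; ring
  linear_combination (-(1/p) * D ^ (-(1/2):ℝ)) * hexp +
    (D ^ (-(1/2):ℝ) * Real.exp (-(1/2)*(c*q)) / p) * hcc
end

section
/- Let n ≥ 1, let A ∈ ℝ^{n×n}, let η ∈ (0,1) with ρ(√(1−η)·A) < 1 (spectral radius of the complex lift), let W, Θ, Y ∈ ℝ^{n×n}, and let Φ̄ be the unique solution of Φ̄ = (1−η)(AΦ̄Aᵀ + W) + ηΘ. Then the real series Σ_{j=0}^{∞} [ (1−η)^{j+1}·tr(Aʲ W (Aʲ)ᵀ Y) + η(1−η)^{j}·tr(Aʲ Θ (Aʲ)ᵀ Y) ] converges and its sum equals tr(Φ̄ Y). (This yields the closed-form optimal average quadratic cost J_ps = tr(PW) + tr(Y Φ̄) of equation (12) in Lemma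 \ref{lem:PSTcost}.) -/
open Matrix Filter Topology

section LocalInst

attribute [local instance] Matrix.linftyOpNormedRing Matrix.linftyOpNormedAlgebra

namespace Stmt10Aux

variable {n : ℕ}

lemma entry_nnnorm_le (M : Matrix (Fin n) (Fin n) ℂ) (i j : Fin n) : ‖M i j‖₊ ≤ ‖M‖₊ := by
  rw [Matrix.linfty_opNNNorm_def]
  exact le_trans (Finset.single_le_sum (f := fun j => ‖M i j‖₊) (fun k _ => zero_le)
    (Finset.mem_univ j)) (Finset.le_sup (f := fun i => ∑ j, ‖M i j‖₊) (Finset.mem_univ i))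

lemma transpose_norm_le (M : Matrix (Fin n) (Fin n) ℂ) : ‖Mᵀ‖ ≤ n * ‖M‖ := by
  have h : ‖Mᵀ‖₊ ≤ n * ‖M‖₊ := by
    rw [Matrix.linfty_opNNNorm_def]
    apply Finset.sup_le
    intro j _
    calc ∑ i, ‖Mᵀ j i‖₊ ≤ ∑ _i : Fin n, ‖M‖₊ :=
          Finset.sum_le_sum fun i _ => entry_nnnorm_le M i j
      _ = n * ‖M‖₊ := by simp [mul_comm]
  exact_mod_cast h

lemma geom_bound (a : Matrix (Fin n) (Fin n) ℂ) (h : spectralRadius ℂ a < 1) :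
    ∃ r : ℝ, 0 ≤ r ∧ r < 1 ∧ ∀ᶠ N in atTop, ‖a ^ N‖ ≤ r ^ N := by
  obtain ⟨u, hu1, hu2⟩ := exists_between h
  lift u to NNReal using hu2.ne_top with r
  have hev : ∀ᶠ N : ℕ in atTop, (‖a ^ N‖₊ : ENNReal) ^ (1 / (N : ℝ)) < (r : ENNReal) :=
    (spectrum.pow_nnnorm_pow_one_div_tendsto_nhds_spectralRadius a).eventually_lt_const hu1
  refine ⟨r, r.coe_nonneg, by exact_mod_cast hu2, ?_⟩
  filter_upwards [hev, eventually_ge_atTop 1] with N hN hN1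
  have hNpos : (0:ℝ) < (N:ℝ) := by exact_mod_cast hN1
  have h2 := ENNReal.rpow_lt_rpow hN hNpos
  rw [← ENNReal.rpow_mul, one_div, inv_mul_cancel₀ hNpos.ne', ENNReal.rpow_one,
    ENNReal.rpow_natCast] at h2
  have : ‖a ^ N‖₊ ≤ r ^ N := by exact_mod_cast h2.le
  exact_mod_cast this

lemma trace_map' (M : Matrix (Fin n) (Fin n) ℝ) :
    (M.map (algebraMap ℝ ℂ)).trace = algebraMap ℝ ℂ M.trace := by
  simp [Matrix.trace, Matrix.diag, Matrix.map_apply, map_sum]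

end Stmt10Aux

open Stmt10Aux

private theorem stmt10_aux (n : ℕ) (hn : 1 ≤ n) (A : Matrix (Fin n) (Fin n) ℝ)
    (η : ℝ) (hη : η ∈ Set.Ioo (0 : ℝ) 1)
    (hρ : spectralRadius ℂ ((Real.sqrt (1 - η) • A).map (algebraMap ℝ ℂ)) < 1)
    (W Θ Y : Matrix (Fin n) (Fin n) ℝ) (Φbar : Matrix (Fin n) (Fin n) ℝ)
    (hΦ : Φbar = (1 - η) • (A * Φbar * Aᵀ + W) + η • Θ) :
    HasSum
      (fun j : ℕ =>
        (1 - η) ^ (j + 1) * (A ^ j * W * (A ^ j)ᵀ * Y).trace +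
          η * (1 - η) ^ j * (A ^ j * Θ * (A ^ j)ᵀ * Y).trace)
      ((Φbar * Y).trace) := by
  obtain ⟨hη0, hη1⟩ := hη
  have h1η : (0:ℝ) ≤ 1 - η := by linarith
  set s := Real.sqrt (1 - η) with hs
  have hs2 : s * s = 1 - η := Real.mul_self_sqrt h1η
  set B : Matrix (Fin n) (Fin n) ℝ := s • A with hB
  set C : Matrix (Fin n) (Fin n) ℝ := (1 - η) • W + η • Θ with hC
  -- real fixed point
  have hfix : Φbar = B * Φbar * Bᵀ + C := by
    have h1 : B * Φbar * Bᵀ + C = (1 - η) • (A * Φbar * Aᵀ + W) + η • Θ := by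
      rw [hB, hC, Matrix.transpose_smul, smul_mul_assoc, smul_mul_assoc, mul_smul_comm,
        smul_smul, hs2, smul_add]
      abel
    rw [h1]; exact hΦ
  -- complexify
  set φ : Matrix (Fin n) (Fin n) ℝ →+* Matrix (Fin n) (Fin n) ℂ :=
    (algebraMap ℝ ℂ).mapMatrix with hφ
  set Bc := φ B with hBc
  set Cc := φ C with hCc
  set Φc := φ Φbar with hΦc
  set Yc := φ Y with hYc
  have hρ' : spectralRadius ℂ Bc < 1 := hρ
  have hmapT : ∀ M : Matrix (Fin n) (Fin n) ℝ, φ (Mᵀ) = (φ M)ᵀ := fun M => by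
    simp [hφ, RingHom.mapMatrix_apply, Matrix.transpose_map]
  have hfixc : Φc = Bc * Φc * Bcᵀ + Cc := by
    have := congrArg φ hfix
    rw [map_add, _root_.map_mul, _root_.map_mul, hmapT] at this
    exact this
  set g : ℕ → Matrix (Fin n) (Fin n) ℂ := fun j => Bc ^ j * Cc * (Bc ^ j)ᵀ with hg
  -- partial sums identity
  have hpartial : ∀ N, Φc = (∑ j ∈ Finset.range N, g j) + Bc ^ N * Φc * (Bc ^ N)ᵀ := by
    intro N
    induction N with
    | zero => simp
    | succ N ih =>
      rw [Finset.sum_range_succ]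
      calc Φc = (∑ j ∈ Finset.range N, g j) + Bc ^ N * Φc * (Bc ^ N)ᵀ := ih
        _ = (∑ j ∈ Finset.range N, g j) + Bc ^ N * (Bc * Φc * Bcᵀ + Cc) * (Bc ^ N)ᵀ := by
            rw [← hfixc]
        _ = (∑ j ∈ Finset.range N, g j) + g N + Bc ^ (N+1) * Φc * (Bc ^ (N+1))ᵀ := by
            simp only [hg, mul_add, add_mul, pow_succ, Matrix.transpose_mul, Matrix.mul_assoc]
            abel
  -- geometric bound
  obtain ⟨r, hr0, hr1, hrev⟩ := geom_bound Bc hρ'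
  have hrr : r * r < 1 := by nlinarith
  have hsumgeo : Summable fun j : ℕ => (n * (‖Cc‖ * 1)) * (r * r) ^ j := by
    exact (summable_geometric_of_lt_one (by positivity) hrr).mul_left _
  -- summability of g
  have hgsummable : Summable g := by
    apply Summable.of_norm_bounded_eventually_nat (g := fun j => (n * ‖Cc‖) * (r * r) ^ j)
    · exact (summable_geometric_of_lt_one (by positivity) hrr).mul_left _
    · filter_upwards [hrev] with j hj
      calc ‖g j‖ ≤ ‖Bc ^ j * Cc‖ * ‖(Bc ^ j)ᵀ‖ := norm_mul_le _ _
        _ ≤ (‖Bc ^ j‖ * ‖Cc‖) * (n * ‖Bc ^ j‖) := by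
            gcongr
            · exact norm_mul_le _ _
            · exact transpose_norm_le _
        _ ≤ (r ^ j * ‖Cc‖) * (n * r ^ j) := by
            gcongr
        _ = (n * ‖Cc‖) * (r * r) ^ j := by rw [mul_pow]; ring
  -- tail tendsto zero
  have htail : Tendsto (fun N => Bc ^ N * Φc * (Bc ^ N)ᵀ) atTop (𝓝 0) := by
    refine squeeze_zero_norm' (a := fun N => (n * ‖Φc‖) * (r * r) ^ N) ?_ ?_
    · filter_upwards [hrev] with N hN
      calc ‖Bc ^ N * Φc * (Bc ^ N)ᵀ‖ ≤ ‖Bc ^ N * Φc‖ * ‖(Bc ^ N)ᵀ‖ := norm_mul_le _ _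
        _ ≤ (‖Bc ^ N‖ * ‖Φc‖) * (n * ‖Bc ^ N‖) := by
            gcongr
            · exact norm_mul_le _ _
            · exact transpose_norm_le _
        _ ≤ (r ^ N * ‖Φc‖) * (n * r ^ N) := by gcongr
        _ = (n * ‖Φc‖) * (r * r) ^ N := by rw [mul_pow]; ring
    · simpa using (tendsto_pow_atTop_nhds_zero_of_lt_one (by positivity) hrr).const_mul (n * ‖Φc‖)
  -- HasSum of matrices
  have hgsum : HasSum g Φc := by
    have hS := hgsummable.hasSum
    have h1 := hS.tendsto_sum_nat
    have h2 : Tendsto (fun N => ∑ j ∈ Finset.range N, g j) atTop (𝓝 Φc) := by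
      have heq : (fun N => ∑ j ∈ Finset.range N, g j)
          = fun N => Φc - Bc ^ N * Φc * (Bc ^ N)ᵀ := by
        funext N
        rw [eq_sub_iff_add_eq, ← hpartial N]
      rw [heq]
      simpa using tendsto_const_nhds.sub htail
    rwa [tendsto_nhds_unique h1 h2] at hS
  -- apply trace ∘ (· * Yc)
  let L : Matrix (Fin n) (Fin n) ℂ →ₗ[ℂ] ℂ :=
    { toFun := fun X => (X * Yc).trace
      map_add' := fun X Z => by simp [add_mul, Matrix.trace_add]
      map_smul' := fun c X => by simp [smul_mul_assoc, Matrix.trace_smul] }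
  have hsum2 : HasSum (fun j => (g j * Yc).trace) ((Φc * Yc).trace) :=
    hgsum.mapL (LinearMap.toContinuousLinearMap L)
  -- identify terms
  have hterm : ∀ j : ℕ, (g j * Yc).trace
      = ((((1 - η) ^ (j + 1) * (A ^ j * W * (A ^ j)ᵀ * Y).trace +
          η * (1 - η) ^ j * (A ^ j * Θ * (A ^ j)ᵀ * Y).trace) : ℝ) : ℂ) := by
    intro j
    have hmap : g j * Yc = φ (B ^ j * C * (B ^ j)ᵀ * Y) := by
      rw [_root_.map_mul, _root_.map_mul, _root_.map_mul, map_pow, hmapT, map_pow]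
    have hreal : (B ^ j * C * (B ^ j)ᵀ * Y).trace
        = (1 - η) ^ (j + 1) * (A ^ j * W * (A ^ j)ᵀ * Y).trace +
          η * (1 - η) ^ j * (A ^ j * Θ * (A ^ j)ᵀ * Y).trace := by
      have hBj : B ^ j = s ^ j • A ^ j := smul_pow s A j
      have hsj : s ^ j * s ^ j = (1 - η) ^ j := by rw [← mul_pow, hs2]
      rw [hBj, hC]
      simp only [Matrix.transpose_smul, smul_mul_assoc, mul_smul_comm, mul_add, add_mul,
        smul_add, smul_smul, Matrix.trace_add, Matrix.trace_smul, smul_eq_mul]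
      rw [pow_succ]
      ring_nf
      rw [show s ^ (j * 2) = (1 - η) ^ j from by rw [pow_mul, sq]; exact hsj]
      ring
    rw [hmap]
    simp only [hφ, RingHom.mapMatrix_apply]
    rw [Stmt10Aux.trace_map', hreal]
    rfl
  have hval : (Φc * Yc).trace = (((Φbar * Y).trace : ℝ) : ℂ) := by
    rw [← _root_.map_mul]
    simp only [hφ, RingHom.mapMatrix_apply]
    rw [Stmt10Aux.trace_map']; rfl
  rw [hval] at hsum2
  have hfun : (fun j => (g j * Yc).trace)
      = fun j : ℕ => ((((1 - η) ^ (j + 1) * (A ^ j * W * (A ^ j)ᵀ * Y).trace +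
          η * (1 - η) ^ j * (A ^ j * Θ * (A ^ j)ᵀ * Y).trace) : ℝ) : ℂ) := funext hterm
  rw [hfun] at hsum2
  have h3 := hsum2.mapL Complex.reCLM
  simpa only [Function.comp_def, Complex.reCLM_apply, Complex.ofReal_re] using h3

end LocalInst

theorem stmt10 (n : ℕ) (hn : 1 ≤ n) (A : Matrix (Fin n) (Fin n) ℝ)
    (η : ℝ) (hη : η ∈ Set.Ioo (0 : ℝ) 1)
    (hρ : spectralRadius ℂ ((Real.sqrt (1 - η) • A).map (algebraMap ℝ ℂ)) < 1)
    (W Θ Y : Matrix (Fin n) (Fin n) ℝ) (Φbar : Matrix (Fin n) (Fin n) ℝ)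
    (hΦ : Φbar = (1 - η) • (A * Φbar * Aᵀ + W) + η • Θ) :
    HasSum
      (fun j : ℕ =>
        (1 - η) ^ (j + 1) * (A ^ j * W * (A ^ j)ᵀ * Y).trace +
          η * (1 - η) ^ j * (A ^ j * Θ * (A ^ j)ᵀ * Y).trace)
      ((Φbar * Y).trace) :=
  stmt10_aux n hn A η hη hρ W Θ Y Φbar hΦ
end

section
/- Let n ≥ 1 be a natural number, let p ∈ (0,1), let v ≥ 3 be a natural number and let j ∈ {1, …, v−2}. Define β : ℤ → ℝ by β(l) = (1−p)^{2/n} if l < 0, β(0) = (1 − (1−p)^{1+2/n})/p, and β(l) = 1 if l > 0 (real exponentiation). Then α(j) := p + Σ_{k=2}^{v−1} p(1−p)^{k−1} · Π_{l=2−k}^{2−k+j−1} β(l) = 1 − (1−p)^{v−1+2j/n}; in particular α(j) < 1. (Telescoping identity for the coefficients α(j) in the proof of Proposition 1, establishing L_μ < L_ps.) -/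
open Real Finset

theorem stmt11 (n : ℕ) (hn : 1 ≤ n) (p : ℝ) (hp : p ∈ Set.Ioo (0 : ℝ) 1)
    (v : ℕ) (hv : 3 ≤ v) (j : ℕ) (hj : j ∈ Finset.Icc 1 (v - 2))
    (β : ℤ → ℝ)
    (hβneg : ∀ l : ℤ, l < 0 → β l = (1 - p) ^ (2 / (n : ℝ)))
    (hβzero : β 0 = (1 - (1 - p) ^ (1 + 2 / (n : ℝ))) / p)
    (hβpos : ∀ l : ℤ, 0 < l → β l = 1) :
    p + ∑ k ∈ Finset.Icc 2 (v - 1),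
        p * (1 - p) ^ (k - 1) * ∏ l ∈ Finset.Icc (2 - (k : ℤ)) (2 - (k : ℤ) + (j : ℤ) - 1), β l =
      1 - (1 - p) ^ ((v : ℝ) - 1 + 2 * (j : ℝ) / (n : ℝ)) ∧
    p + ∑ k ∈ Finset.Icc 2 (v - 1),
        p * (1 - p) ^ (k - 1) * ∏ l ∈ Finset.Icc (2 - (k : ℤ)) (2 - (k : ℤ) + (j : ℤ) - 1), β l
      < 1 := by
  obtain ⟨hp0, hp1⟩ := hp
  rw [Finset.mem_Icc] at hj
  obtain ⟨hj1, hj2⟩ := hj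
  have hn0 : (0:ℝ) < n := by exact_mod_cast hn
  set q : ℝ := 1 - p with hqdef
  have hq0 : 0 < q := by simp only [hqdef]; linarith
  have hq1 : q < 1 := by simp only [hqdef]; linarith
  set c : ℝ := 2 / (n:ℝ) with hcdef
  have hc : 0 < c := by positivity
  set F : ℕ → ℝ := fun i => q ^ ((i:ℝ) + 1 + c * ((min i j : ℕ) : ℝ)) with hF
  -- key telescoping identity for each summand
  have key : ∀ i : ℕ,
      p * q ^ (i + 1) * ∏ l ∈ Finset.Icc (-(i:ℤ)) (-(i:ℤ) + (j:ℤ) - 1), β l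
        = F i - F (i + 1) := by
    intro i
    by_cases hij : j ≤ i
    · -- all factors have negative index
      have hprod : ∏ l ∈ Finset.Icc (-(i:ℤ)) (-(i:ℤ) + (j:ℤ) - 1), β l
          = q ^ (c * (j:ℝ)) := by
        rw [Finset.prod_congr rfl (fun l hl => hβneg l (by
          rw [Finset.mem_Icc] at hl; omega)), Finset.prod_const, Int.card_Icc]
        have h1 : (-(i:ℤ) + (j:ℤ) - 1 + 1 - -(i:ℤ)).toNat = j := by omega
        rw [h1, ← Real.rpow_natCast (q ^ c) j, ← Real.rpow_mul hq0.le]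
      have hmin1 : min i j = j := min_eq_right hij
      have hmin2 : min (i + 1) j = j := min_eq_right (by omega)
      rw [hprod]
      simp only [hF, hmin1, hmin2]
      have hAexp : ((i + 1 : ℕ) : ℝ) + 1 + c * (j:ℝ) = ((i:ℝ) + 1 + c * (j:ℝ)) + 1 := by
        push_cast; ring
      rw [hAexp, Real.rpow_add_one hq0.ne', ← Real.rpow_natCast q (i + 1)]
      have hE : q ^ (((i + 1 : ℕ)) : ℝ) * q ^ (c * (j:ℝ)) = q ^ ((i:ℝ) + 1 + c * (j:ℝ)) := by
        rw [← Real.rpow_add hq0]; congr 1; push_cast; ring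
      linear_combination p * hE + (q ^ ((i:ℝ) + 1 + c * (j:ℝ))) * hqdef
    · -- i < j : factors run through all of -i,…,-1, then 0, then positives
      push_neg at hij
      have hsplit : Finset.Icc (-(i:ℤ)) (-(i:ℤ) + (j:ℤ) - 1)
          = Finset.Icc (-(i:ℤ)) (-1) ∪ Finset.Icc 0 (-(i:ℤ) + (j:ℤ) - 1) := by
        ext x; simp only [Finset.mem_Icc, Finset.mem_union]; omega
      have hdisj : Disjoint (Finset.Icc (-(i:ℤ)) (-1))
          (Finset.Icc 0 (-(i:ℤ) + (j:ℤ) - 1)) := by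
        rw [Finset.disjoint_left]
        intro x hx hx'
        rw [Finset.mem_Icc] at hx hx'
        omega
      have h0 : Finset.Icc (0:ℤ) (-(i:ℤ) + (j:ℤ) - 1)
          = insert 0 (Finset.Icc 1 (-(i:ℤ) + (j:ℤ) - 1)) := by
        ext x; simp only [Finset.mem_Icc, Finset.mem_insert]; omega
      have hpos1 : ∏ l ∈ Finset.Icc (1:ℤ) (-(i:ℤ) + (j:ℤ) - 1), β l = 1 :=
        Finset.prod_eq_one fun x hx => hβpos x (by
          rw [Finset.mem_Icc] at hx; omega)
      have hneg1 : ∏ l ∈ Finset.Icc (-(i:ℤ)) (-1), β l = q ^ (c * (i:ℝ)) := by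
        rw [Finset.prod_congr rfl (fun l hl => hβneg l (by
          rw [Finset.mem_Icc] at hl; omega)), Finset.prod_const, Int.card_Icc]
        have h1 : ((-1 : ℤ) + 1 - -(i:ℤ)).toNat = i := by omega
        rw [h1, ← Real.rpow_natCast (q ^ c) i, ← Real.rpow_mul hq0.le]
      rw [hsplit, Finset.prod_union hdisj, hneg1, h0,
        Finset.prod_insert (by simp), hpos1, hβzero]
      have hmin1 : min i j = i := min_eq_left hij.le
      have hmin2 : min (i + 1) j = i + 1 := min_eq_left (by omega)
      simp only [hF, hmin1, hmin2]
      have hpB : p * ((1 - q ^ (1 + c)) / p) = 1 - q ^ (1 + c) := by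
        field_simp
      have hAexp : ((i + 1 : ℕ) : ℝ) + 1 + c * ((i + 1 : ℕ) : ℝ)
          = ((i:ℝ) + 1 + c * (i:ℝ)) + (1 + c) := by push_cast; ring
      have hE2 : q ^ (((i:ℝ) + 1 + c * (i:ℝ)) + (1 + c))
          = q ^ ((i:ℝ) + 1 + c * (i:ℝ)) * q ^ (1 + c) := Real.rpow_add hq0 _ _
      rw [hAexp, hE2, ← Real.rpow_natCast q (i + 1)]
      have hE : q ^ (((i + 1 : ℕ)) : ℝ) * q ^ (c * (i:ℝ)) = q ^ ((i:ℝ) + 1 + c * (i:ℝ)) := by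
        rw [← Real.rpow_add hq0]; congr 1; push_cast; ring
      have hne : p ≠ 0 := hp0.ne'
      rw [mul_one]
      calc p * q ^ (((i + 1 : ℕ)) : ℝ) * (q ^ (c * (i:ℝ)) * ((1 - q ^ (1 + c)) / p))
          = (q ^ (((i + 1 : ℕ)) : ℝ) * q ^ (c * (i:ℝ))) * ((1 - q ^ (1 + c)) * (p / p)) := by
            ring
        _ = q ^ ((i:ℝ) + 1 + c * (i:ℝ)) * (1 - q ^ (1 + c)) := by
            rw [hE, div_self hne, mul_one]
        _ = q ^ ((i:ℝ) + 1 + c * (i:ℝ)) - q ^ ((i:ℝ) + 1 + c * (i:ℝ)) * q ^ (1 + c) := by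
            ring
  -- rewrite the sum as a telescoping sum
  have hsum : ∑ k ∈ Finset.Icc 2 (v - 1),
      p * q ^ (k - 1) * ∏ l ∈ Finset.Icc (2 - (k : ℤ)) (2 - (k : ℤ) + (j : ℤ) - 1), β l
        = F 0 - F (v - 2) := by
    have hIcc : Finset.Icc 2 (v - 1) = Finset.Ico 2 v := by
      ext x; simp only [Finset.mem_Icc, Finset.mem_Ico]; omega
    rw [hIcc, Finset.sum_Ico_eq_sum_range]
    have hc1 : v - 2 = v - 2 := rfl
    rw [← Finset.sum_range_sub' F (v - 2)]
    refine Finset.sum_congr rfl fun i _ => ?_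
    have h1 : 2 + i - 1 = i + 1 := by omega
    have h2 : (2 : ℤ) - ((2 + i : ℕ) : ℤ) = -(i:ℤ) := by push_cast; ring
    rw [h1, h2]
    exact key i
  have hF0 : F 0 = q := by
    simp only [hF, Nat.cast_zero, Nat.zero_min, Nat.cast_zero, mul_zero, add_zero,
      zero_add]
    exact Real.rpow_one q
  have hFv : F (v - 2) = q ^ ((v:ℝ) - 1 + 2 * (j:ℝ) / (n:ℝ)) := by
    have hmin : min (v - 2) j = j := min_eq_right hj2
    simp only [hF, hmin]
    congr 1
    rw [Nat.cast_sub (by omega : 2 ≤ v), hcdef]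
    push_cast
    ring
  have hqE : 0 < q ^ ((v:ℝ) - 1 + 2 * (j:ℝ) / (n:ℝ)) := Real.rpow_pos_of_pos hq0 _
  constructor
  · rw [hsum, hF0, hFv]
    simp only [hqdef]
    ring
  · rw [hsum, hF0, hFv]
    have : p + (q - q ^ ((v:ℝ) - 1 + 2 * (j:ℝ) / (n:ℝ)))
        = 1 - q ^ ((v:ℝ) - 1 + 2 * (j:ℝ) / (n:ℝ)) := by
      simp only [hqdef]; ring
    rw [this]
    linarith
end

section
/- Let m ≥ 1 and let c : Fin m → ℝ with c_j > 0 for all j. Define p* : Fin m → ℝ by p*_j = c_j / (Σ_{i=1}^{m} c_i), and define the total network utility U(p) = Σ_{j=1}^{m} c_j · log( p_j · Π_{i≠j} (1 − p_i) ) for p : Fin m → ℝ with 0 < p_j < 1 for all j. Then p* satisfies 0 < p*_j < 1 for all j, and U(p) ≤ U(p*) for every p with 0 < p_j < 1 for all j, with equality only if p = p*. (The triggering probabilities p^{j*} = c^j/Σ_{i} c^i maximize the weighted proportional-fairness network utility, solving optimization problem (21).) -/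
open Real Finset

lemma pt_le (a b x : ℝ) (ha : 0 < a) (hb : 0 < b) (hx : 0 < x) (hx1 : x < 1) :
    a * Real.log x + b * Real.log (1 - x) ≤
      a * Real.log (a / (a + b)) + b * Real.log (b / (a + b)) := by
  have hs : 0 < a + b := by linarith
  have h1x : 0 < 1 - x := by linarith
  have hxs : 0 < a / (a + b) := div_pos ha hs
  have hys : 0 < b / (a + b) := div_pos hb hs
  have h1 : Real.log x - Real.log (a / (a + b)) ≤ x * (a + b) / a - 1 := by
    have := Real.log_le_sub_one_of_pos (div_pos hx hxs)
    rwa [Real.log_div (ne_of_gt hx) (ne_of_gt hxs), div_div_eq_mul_div] at this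
  have h2 : Real.log (1 - x) - Real.log (b / (a + b)) ≤ (1 - x) * (a + b) / b - 1 := by
    have := Real.log_le_sub_one_of_pos (div_pos h1x hys)
    rwa [Real.log_div (ne_of_gt h1x) (ne_of_gt hys), div_div_eq_mul_div] at this
  have e1 : a * (x * (a + b) / a) = x * (a + b) := by field_simp
  have e2 : b * ((1 - x) * (a + b) / b) = (1 - x) * (a + b) := by field_simp
  have m1 := mul_le_mul_of_nonneg_left h1 ha.le
  have m2 := mul_le_mul_of_nonneg_left h2 hb.le
  nlinarith [m1, m2, e1, e2]

lemma pt_lt (a b x : ℝ) (ha : 0 < a) (hb : 0 < b) (hx : 0 < x) (hx1 : x < 1)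
    (hne : x ≠ a / (a + b)) :
    a * Real.log x + b * Real.log (1 - x) <
      a * Real.log (a / (a + b)) + b * Real.log (b / (a + b)) := by
  have hs : 0 < a + b := by linarith
  have h1x : 0 < 1 - x := by linarith
  have hxs : 0 < a / (a + b) := div_pos ha hs
  have hys : 0 < b / (a + b) := div_pos hb hs
  have h1 : Real.log x - Real.log (a / (a + b)) < x * (a + b) / a - 1 := by
    have hne1 : x / (a / (a + b)) ≠ 1 := by
      intro h
      apply hne
      have := (div_eq_one_iff_eq (ne_of_gt hxs)).1 h
      exact this
    have := Real.log_lt_sub_one_of_pos (div_pos hx hxs) hne1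
    rwa [Real.log_div (ne_of_gt hx) (ne_of_gt hxs), div_div_eq_mul_div] at this
  have h2 : Real.log (1 - x) - Real.log (b / (a + b)) ≤ (1 - x) * (a + b) / b - 1 := by
    have := Real.log_le_sub_one_of_pos (div_pos h1x hys)
    rwa [Real.log_div (ne_of_gt h1x) (ne_of_gt hys), div_div_eq_mul_div] at this
  have e1 : a * (x * (a + b) / a) = x * (a + b) := by field_simp
  have e2 : b * ((1 - x) * (a + b) / b) = (1 - x) * (a + b) := by field_simp
  have m1 := (mul_lt_mul_of_pos_left h1 ha)
  have m2 := mul_le_mul_of_nonneg_left h2 hb.le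
  nlinarith [m1, m2, e1, e2]

theorem stmt15 (m : ℕ) (hm : 2 ≤ m) (c : Fin m → ℝ) (hc : ∀ j, 0 < c j)
    (pstar : Fin m → ℝ) (hpstar : ∀ j, pstar j = c j / ∑ i : Fin m, c i) :
    (∀ j, 0 < pstar j ∧ pstar j < 1) ∧
      ∀ p : Fin m → ℝ, (∀ j, 0 < p j ∧ p j < 1) →
        (∑ j : Fin m, c j * Real.log (p j * ∏ i ∈ Finset.univ.erase j, (1 - p i))) ≤
            (∑ j : Fin m,
              c j * Real.log (pstar j * ∏ i ∈ Finset.univ.erase j, (1 - pstar i))) ∧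
          ((∑ j : Fin m, c j * Real.log (p j * ∏ i ∈ Finset.univ.erase j, (1 - p i))) =
              (∑ j : Fin m,
                c j * Real.log (pstar j * ∏ i ∈ Finset.univ.erase j, (1 - pstar i))) →
            p = pstar) := by
  set S : ℝ := ∑ i : Fin m, c i with hSdef
  have hS : 0 < S := Finset.sum_pos (fun i _ => hc i) ⟨⟨0, by omega⟩, Finset.mem_univ _⟩
  have hlt : ∀ j, c j < S := by
    intro j
    have hsplit : S = c j + ∑ i ∈ Finset.univ.erase j, c i :=
      (Finset.add_sum_erase _ _ (Finset.mem_univ j)).symm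
    have hne : (Finset.univ.erase j).Nonempty := by
      rw [← Finset.card_pos, Finset.card_erase_of_mem (Finset.mem_univ j)]
      simp [Finset.card_univ]
      omega
    have hpos : 0 < ∑ i ∈ Finset.univ.erase j, c i :=
      Finset.sum_pos (fun i _ => hc i) hne
    linarith
  have hps : ∀ j, 0 < pstar j ∧ pstar j < 1 := by
    intro j
    rw [hpstar j]
    exact ⟨div_pos (hc j) hS, (div_lt_one hS).2 (hlt j)⟩
  refine ⟨hps, ?_⟩
  -- rewrite the utility
  have hrw : ∀ p : Fin m → ℝ, (∀ j, 0 < p j ∧ p j < 1) →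
      (∑ j : Fin m, c j * Real.log (p j * ∏ i ∈ Finset.univ.erase j, (1 - p i)))
      = ∑ j : Fin m, (c j * Real.log (p j) + (S - c j) * Real.log (1 - p j)) := by
    intro p hp
    have h1 : ∀ j : Fin m, c j * Real.log (p j * ∏ i ∈ Finset.univ.erase j, (1 - p i))
        = c j * Real.log (p j) + c j * (∑ i : Fin m, Real.log (1 - p i))
          - c j * Real.log (1 - p j) := by
      intro j
      have hprodpos : 0 < ∏ i ∈ Finset.univ.erase j, (1 - p i) :=
        Finset.prod_pos (fun i _ => by linarith [(hp i).2])
      rw [Real.log_mul (ne_of_gt (hp j).1) (ne_of_gt hprodpos),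
        Real.log_prod (fun i _ => ne_of_gt (by linarith [(hp i).2])),
        Finset.sum_erase_eq_sub (Finset.mem_univ j)]
      ring
    simp only [h1]
    rw [Finset.sum_sub_distrib, Finset.sum_add_distrib, Finset.sum_add_distrib,
      ← Finset.sum_mul]
    have : ∑ j : Fin m, (S - c j) * Real.log (1 - p j)
        = S * (∑ i : Fin m, Real.log (1 - p i)) - ∑ j : Fin m, c j * Real.log (1 - p j) := by
      rw [Finset.mul_sum, ← Finset.sum_sub_distrib]
      exact Finset.sum_congr rfl (fun j _ => by ring)
    rw [this]
    ring
  intro p hp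
  have key_le : ∀ j : Fin m,
      c j * Real.log (p j) + (S - c j) * Real.log (1 - p j) ≤
      c j * Real.log (pstar j) + (S - c j) * Real.log (1 - pstar j) := by
    intro j
    have hb : 0 < S - c j := by linarith [hlt j]
    have hab : c j + (S - c j) = S := by ring
    have hx : pstar j = c j / (c j + (S - c j)) := by rw [hpstar j, hab]
    have hy : 1 - pstar j = (S - c j) / (c j + (S - c j)) := by
      rw [hpstar j, hab]; field_simp
    rw [hy, hx]
    exact pt_le (c j) (S - c j) (p j) (hc j) hb (hp j).1 (hp j).2
  have key_lt : ∀ j : Fin m, p j ≠ pstar j →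
      c j * Real.log (p j) + (S - c j) * Real.log (1 - p j) <
      c j * Real.log (pstar j) + (S - c j) * Real.log (1 - pstar j) := by
    intro j hne
    have hb : 0 < S - c j := by linarith [hlt j]
    have hab : c j + (S - c j) = S := by ring
    have hx : pstar j = c j / (c j + (S - c j)) := by rw [hpstar j, hab]
    have hy : 1 - pstar j = (S - c j) / (c j + (S - c j)) := by
      rw [hpstar j, hab]; field_simp
    rw [hy, hx]
    exact pt_lt (c j) (S - c j) (p j) (hc j) hb (hp j).1 (hp j).2 (hx ▸ hne)
  rw [hrw p hp, hrw pstar hps]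
  constructor
  · exact Finset.sum_le_sum (fun j _ => key_le j)
  · intro heq
    by_contra hne
    have : ∃ j, p j ≠ pstar j := by
      by_contra h
      push_neg at h
      exact hne (funext h)
    obtain ⟨j, hj⟩ := this
    have hstrict : (∑ j : Fin m, (c j * Real.log (p j) + (S - c j) * Real.log (1 - p j))) <
        ∑ j : Fin m, (c j * Real.log (pstar j) + (S - c j) * Real.log (1 - pstar j)) :=
      Finset.sum_lt_sum (fun i _ => key_le i) ⟨j, Finset.mem_univ j, key_lt j hj⟩
    linarith
end
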